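/- Let s be a selected node distribution with s_0 = 0 and let π*(s) be its vertical order. Then MC(π*(s)) ≤ MC(π) for every cluster order π ∈ Π(s); that is, among all cluster orders with the given selected node distribution, the vertical order (the output of Algorithm 1) minimizes the min-cut. -/

import Mathlib

/-- Relative location `h_π(i) = #{1 ≤ j ≤ i : π j = π i}`. -/
def relLoc (π : ℕ → ℕ) (i : ℕ) : ℕ :=
  ((Finset.Icc 1 i).filter (fun j => π j = π i)).card

/-- Intra-cluster coefficient `a_i(π) = d_I + 1 − h_π(i)` (truncated subtraction). -/
def aCoef (dI : ℕ) (π : ℕ → ℕ) (i : ℕ) : ℕ :=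
  dI + 1 - relLoc π i

/-- Cross-cluster coefficient `b_i(π) = max(0, d_C − (i − h_π(i)))` (truncated subtraction). -/
def bCoef (dC : ℕ) (π : ℕ → ℕ) (i : ℕ) : ℕ :=
  dC - (i - relLoc π i)

/-- Part incoming weight `w_i(π)`: for a separate position (`π i = 0`) it is
`(d_I + d_C + 1 − i)·β_C`, otherwise `a_i(π)·β_I + b_i(π)·β_C`. -/
noncomputable def weight (dI dC : ℕ) (βI βC : ℝ) (π : ℕ → ℕ) (i : ℕ) : ℝ :=
  if π i = 0 then ((dI + dC + 1 - i : ℕ) : ℝ) * βC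
  else (aCoef dI π i : ℝ) * βI + (bCoef dC π i : ℝ) * βC

/-- Min-cut `MC(π) = Σ_{i=1}^k min(α, w_i(π))`. -/
noncomputable def MC (k dI dC : ℕ) (βI βC α : ℝ) (π : ℕ → ℕ) : ℝ :=
  ∑ i ∈ Finset.Icc 1 k, min α (weight dI dC βI βC π i)

/-- A cluster order: a `k`-tuple with entries in `{0, 1, …, L}`. -/
def IsClusterOrder (L k : ℕ) (π : ℕ → ℕ) : Prop :=
  ∀ i, 1 ≤ i → i ≤ k → π i ≤ L

/-- A selected node distribution `(s_0, s_1, …, s_L)`: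
`R ≥ s_1 ≥ s_2 ≥ … ≥ s_L` and `s_0 + s_1 + … + s_L = k`. -/
def IsDist (L R k : ℕ) (s : ℕ → ℕ) : Prop :=
  (∀ i, 1 ≤ i → i + 1 ≤ L → s (i + 1) ≤ s i) ∧
  (∀ i, 1 ≤ i → i ≤ L → s i ≤ R) ∧
  ∑ i ∈ Finset.range (L + 1), s i = k

/-- `π ∈ Π(s)`: `π` is a cluster order with `#{1 ≤ j ≤ k : π j = c} = s c` for all `0 ≤ c ≤ L`. -/
def MemPi (L k : ℕ) (s : ℕ → ℕ) (π : ℕ → ℕ) : Prop :=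
  IsClusterOrder L k π ∧
  ∀ c, c ≤ L → ((Finset.Icc 1 k).filter (fun j => π j = c)).card = s c

/-- Vertical order of distribution `s` (possibly with separate entries, whose positions are
not constrained here):  over the cluster positions (`π i ≠ 0`) in increasing order, relative
locations are nondecreasing, with ties broken by increasing cluster index. -/
def IsVerticalOrder (L k : ℕ) (s : ℕ → ℕ) (π : ℕ → ℕ) : Prop :=
  MemPi L k s π ∧
  ∀ i j, 1 ≤ i → i < j → j ≤ k → π i ≠ 0 → π j ≠ 0 →
    relLoc π i ≤ relLoc π j ∧ (relLoc π i = relLoc π j → π i < π j)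

/-- The distribution `s*` (no separate node): `s*_0 = 0`, `s*_i = R` for `1 ≤ i ≤ ⌊k/R⌋`,
`s*_{⌊k/R⌋+1} = k − ⌊k/R⌋·R`, and `0` beyond. -/
def sStar0 (R k : ℕ) : ℕ → ℕ := fun i =>
  if i = 0 then 0
  else if i ≤ k / R then R
  else if i = k / R + 1 then k - k / R * R
  else 0

/-- The distribution with one separate node: `s_0 = 1`, `s_i = R` for `1 ≤ i ≤ ⌊(k−1)/R⌋`,
`s_{⌊(k−1)/R⌋+1} = (k−1) − ⌊(k−1)/R⌋·R`, and `0` beyond. -/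
def sStar1 (R k : ℕ) : ℕ → ℕ := fun i =>
  if i = 0 then 1
  else if i ≤ (k - 1) / R then R
  else if i = (k - 1) / R + 1 then (k - 1) - (k - 1) / R * R
  else 0

/-- `π^(j)`: the cluster order with exactly one separate entry, located at position `j`,
whose cluster entries form the vertical order of the distribution `sStar1 R k`. -/
def IsPiJ (L R k j : ℕ) (π : ℕ → ℕ) : Prop :=
  π j = 0 ∧ IsVerticalOrder L k (sStar1 R k) π

/- ===================== auxiliary lemmas ===================== -/

lemma relLoc_pos (π : ℕ → ℕ) {i : ℕ} (hi : 1 ≤ i) : 1 ≤ relLoc π i := by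
  apply Finset.card_pos.mpr
  exact ⟨i, by simp [Finset.mem_filter, Finset.mem_Icc, hi]⟩

lemma relLoc_le_self (π : ℕ → ℕ) (i : ℕ) : relLoc π i ≤ i := by
  calc relLoc π i ≤ (Finset.Icc 1 i).card := Finset.card_filter_le _ _
  _ = i := by simp

lemma relLoc_lt (π : ℕ → ℕ) {i j : ℕ} (hi : 1 ≤ i) (hij : i < j) (hp : π i = π j) :
    relLoc π i < relLoc π j := by
  unfold relLoc
  rw [hp]
  apply Finset.card_lt_card
  constructor
  · intro x hx
    simp only [Finset.mem_filter, Finset.mem_Icc] at hx ⊢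
    exact ⟨⟨hx.1.1, by omega⟩, hx.2⟩
  · intro hsub
    have : j ∈ (Finset.Icc 1 j).filter (fun x => π x = π j) := by
      simp [Finset.mem_Icc]; omega
    have := hsub this
    simp only [Finset.mem_filter, Finset.mem_Icc] at this
    omega

lemma min_sub_min {α a1 a2 b1 b2 : ℝ} (hb2a2 : b2 ≤ a2) (hdiff : a1 - a2 ≤ b1 - b2)
    (ha : a2 ≤ a1) (hb : b2 ≤ b1) : min α a1 - min α a2 ≤ min α b1 - min α b2 := by
  rcases le_total α b2 with h1 | h1
  · rw [min_eq_left h1, min_eq_left (le_trans h1 hb), min_eq_left (le_trans h1 hb2a2),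
      min_eq_left (le_trans (le_trans h1 hb2a2) ha)]
  · rcases le_total α b1 with h2 | h2
    · rw [min_eq_right h1, min_eq_left h2]
      have h3 : min α a1 ≤ α := min_le_left _ _
      have h4 : b2 ≤ min α a2 := le_min h1 hb2a2
      linarith
    · rw [min_eq_right h1, min_eq_right h2]
      rcases le_total α a2 with h3 | h3
      · rw [min_eq_left h3, min_eq_left (le_trans h3 ha)]; linarith
      · rw [min_eq_right h3]
        rcases le_total α a1 with h4 | h4
        · rw [min_eq_left h4]; linarith
        · rw [min_eq_right h4]; linarith

lemma telescope_sum (G : ℕ → ℝ) {a b : ℕ} (h : a ≤ b) :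
    G a = G b + ∑ v ∈ Finset.Ico a b, (G v - G (v + 1)) := by
  induction b, h using Nat.le_induction with
  | base => simp
  | succ n hn ih =>
    rw [Finset.sum_Ico_succ_top (by omega)]
    linarith

lemma downClosed_eq_Icc {k : ℕ} (A : Finset ℕ) (hA : A ⊆ Finset.Icc 1 k)
    (hdc : ∀ i j, 1 ≤ i → i ≤ j → j ∈ A → i ∈ A) : A = Finset.Icc 1 A.card := by
  have hsub : Finset.Icc 1 A.card ⊆ A := by
    intro j hj
    simp only [Finset.mem_Icc] at hj
    by_contra hjA
    have hsub2 : A ⊆ Finset.Icc 1 (j - 1) := by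
      intro a ha
      have h1 := hA ha
      simp only [Finset.mem_Icc] at h1 ⊢
      refine ⟨h1.1, ?_⟩
      by_contra hlt
      push_neg at hlt
      exact hjA (hdc j a hj.1 (by omega) ha)
    have := Finset.card_le_card hsub2
    simp [Nat.card_Icc] at this
    omega
  have := Finset.eq_of_subset_of_card_le hsub (by simp [Nat.card_Icc])
  exact this.symm

noncomputable def Gfun (dI dC : ℕ) (βI βC α : ℝ) (i t : ℕ) : ℝ :=
  min α (((dI + 1 - t : ℕ) : ℝ) * βI + ((dC - (i - t) : ℕ) : ℝ) * βC)

lemma Gfun_diff_mono (dI dC : ℕ) (βI βC α : ℝ) (hβ : βC ≤ βI) (hβC : 0 < βC)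
    {v i j : ℕ} (hvi : v + 1 ≤ i) (hij : i ≤ j) (hvd : v ≤ dI) :
    Gfun dI dC βI βC α i v - Gfun dI dC βI βC α i (v + 1)
      ≤ Gfun dI dC βI βC α j v - Gfun dI dC βI βC α j (v + 1) := by
  unfold Gfun
  have hA : dI + 1 - v = (dI + 1 - (v + 1)) + 1 := by omega
  have cA : ((dI + 1 - v : ℕ) : ℝ) = ((dI + 1 - (v + 1) : ℕ) : ℝ) + 1 := by
    rw [hA]; push_cast; ring
  have hBi2 : (dC - (i - (v + 1))) ≤ (dC - (i - v)) + 1 := by omega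
  have hBj2 : (dC - (j - (v + 1))) ≤ (dC - (j - v)) + 1 := by omega
  have hji2 : (dC - (j - (v + 1))) ≤ (dC - (i - (v + 1))) := by omega
  have hdd : (dC - (i - v)) + (dC - (j - (v + 1))) ≤ (dC - (i - (v + 1))) + (dC - (j - v)) := by
    omega
  have cBi2 : ((dC - (i - (v + 1)) : ℕ) : ℝ) ≤ ((dC - (i - v) : ℕ) : ℝ) + 1 := by
    exact_mod_cast hBi2
  have cBj2 : ((dC - (j - (v + 1)) : ℕ) : ℝ) ≤ ((dC - (j - v) : ℕ) : ℝ) + 1 := by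
    exact_mod_cast hBj2
  have cji2 : ((dC - (j - (v + 1)) : ℕ) : ℝ) ≤ ((dC - (i - (v + 1)) : ℕ) : ℝ) := by
    exact_mod_cast hji2
  have cdd : ((dC - (i - v) : ℕ) : ℝ) + ((dC - (j - (v + 1)) : ℕ) : ℝ)
      ≤ ((dC - (i - (v + 1)) : ℕ) : ℝ) + ((dC - (j - v) : ℕ) : ℝ) := by exact_mod_cast hdd
  have pA : ((dI + 1 - v : ℕ) : ℝ) * βI = ((dI + 1 - (v + 1) : ℕ) : ℝ) * βI + βI := by
    rw [cA]; ring
  have p1 := mul_le_mul_of_nonneg_right cji2 hβC.le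
  have p2 : (((dC - (i - v) : ℕ) : ℝ) + ((dC - (j - (v + 1)) : ℕ) : ℝ)) * βC
      ≤ (((dC - (i - (v + 1)) : ℕ) : ℝ) + ((dC - (j - v) : ℕ) : ℝ)) * βC :=
    mul_le_mul_of_nonneg_right cdd hβC.le
  have p3 := mul_le_mul_of_nonneg_right cBi2 hβC.le
  have p4 := mul_le_mul_of_nonneg_right cBj2 hβC.le
  apply min_sub_min
  · linarith
  · linarith
  · linarith
  · linarith

lemma sum_prefix_le {m k N : ℕ} (B : Finset ℕ) (hB : B ⊆ Finset.Icc (m + 1) k)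
    (hcard : B.card = N) (D : ℕ → ℝ)
    (hmono : ∀ i j, m + 1 ≤ i → i ≤ j → j ≤ k → D i ≤ D j) :
    ∑ i ∈ Finset.Icc (m + 1) (m + N), D i ≤ ∑ i ∈ B, D i := by
  set e := B.orderEmbOfFin hcard with he
  have hmem : ∀ t : Fin N, e t ∈ Finset.Icc (m + 1) k := fun t =>
    hB (Finset.orderEmbOfFin_mem B hcard t)
  have hEmb : ∀ n (h : n < N), m + 1 + n ≤ e ⟨n, h⟩ := by
    intro n
    induction n with
    | zero =>
      intro h
      have := hmem ⟨0, h⟩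
      simp only [Finset.mem_Icc] at this
      omega
    | succ n ih =>
      intro h
      have h' : n < N := by omega
      have h1 := ih h'
      have hlt : e ⟨n, h'⟩ < e ⟨n + 1, h⟩ := by
        apply (B.orderEmbOfFin hcard).strictMono
        simp [Fin.lt_def]
      omega
  have h1 : Finset.Icc (m + 1) (m + N) = Finset.image (fun t : Fin N => m + 1 + (t : ℕ))
      Finset.univ := by
    ext x
    simp only [Finset.mem_Icc, Finset.mem_image, Finset.mem_univ, true_and]
    constructor
    · intro hx
      exact ⟨⟨x - (m + 1), by omega⟩, by simp; omega⟩
    · rintro ⟨t, rfl⟩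
      have := t.2
      omega
  have h2 : B = Finset.image (fun t : Fin N => e t) Finset.univ := by
    ext x
    simp only [Finset.mem_image, Finset.mem_univ, true_and]
    constructor
    · intro hx
      have : x ∈ Set.range e := by rw [Finset.range_orderEmbOfFin]; exact hx
      obtain ⟨t, ht⟩ := this
      exact ⟨t, ht⟩
    · rintro ⟨t, rfl⟩
      exact Finset.orderEmbOfFin_mem B hcard t
  rw [h1, h2, Finset.sum_image (fun a _ b _ hab => Fin.val_injective (by simpa using hab)),
    Finset.sum_image (fun a _ b _ hab => e.injective hab)]
  apply Finset.sum_le_sum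
  intro t _
  apply hmono
  · omega
  · exact hEmb t.1 t.2
  · have := hmem t; simp only [Finset.mem_Icc] at this; exact this.2

lemma cluster_count (k L : ℕ) (s : ℕ → ℕ) (π : ℕ → ℕ) (hπ : MemPi L k s π)
    (c : ℕ) (hc : c ≤ L) (v : ℕ) :
    (((Finset.Icc 1 k).filter (fun j => π j = c)).filter (fun i => relLoc π i ≤ v)).card
      = min v (s c) := by
  set T := (Finset.Icc 1 k).filter (fun j => π j = c) with hTdef
  have hTmem : ∀ i ∈ T, 1 ≤ i ∧ i ≤ k ∧ π i = c := by
    intro i hi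
    simp only [hTdef, Finset.mem_filter, Finset.mem_Icc] at hi
    exact ⟨hi.1.1, hi.1.2, hi.2⟩
  have hTcard : T.card = s c := hπ.2 c hc
  have hinj : Set.InjOn (relLoc π) T := by
    intro x hx y hy hxy
    by_contra hne
    obtain ⟨hx1, hxk, hxc⟩ := hTmem x hx
    obtain ⟨hy1, hyk, hyc⟩ := hTmem y hy
    rcases Nat.lt_or_ge x y with h | h
    · exact absurd hxy (Nat.ne_of_lt (relLoc_lt π hx1 h (hxc.trans hyc.symm)))
    · have h' : y < x := by omega
      exact absurd hxy.symm (Nat.ne_of_lt (relLoc_lt π hy1 h' (hyc.trans hxc.symm)))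
  have himg : T.image (relLoc π) = Finset.Icc 1 (s c) := by
    apply Finset.eq_of_subset_of_card_le
    · intro m hm
      obtain ⟨i, hi, rfl⟩ := Finset.mem_image.mp hm
      obtain ⟨hi1, hik, hic⟩ := hTmem i hi
      simp only [Finset.mem_Icc]
      refine ⟨relLoc_pos π hi1, ?_⟩
      calc relLoc π i ≤ T.card := by
            apply Finset.card_le_card
            intro x hx
            simp only [Finset.mem_filter, Finset.mem_Icc] at hx
            simp only [hTdef, Finset.mem_filter, Finset.mem_Icc]
            exact ⟨⟨hx.1.1, le_trans hx.1.2 hik⟩, hx.2.trans hic⟩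
        _ = s c := hTcard
    · rw [Finset.card_image_of_injOn hinj, hTcard]
      simp
  have key : (T.filter (fun i => relLoc π i ≤ v)).image (relLoc π)
      = Finset.Icc 1 (min (s c) v) := by
    have := Finset.filter_image (f := relLoc π) (s := T) (p := fun m => m ≤ v)
    rw [← this, himg]
    ext x
    simp only [Finset.mem_filter, Finset.mem_Icc, Finset.mem_Icc]
    omega
  have hcards : (T.filter (fun i => relLoc π i ≤ v)).card
      = (Finset.Icc 1 (min (s c) v)).card := by
    rw [← key, Finset.card_image_of_injOn (hinj.mono (by
      intro x hx
      exact Finset.filter_subset _ _ hx))]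
  rw [hcards]
  simp [Nat.card_Icc]
  omega

lemma count_le_v (k L : ℕ) (s : ℕ → ℕ) (π : ℕ → ℕ) (hπ : MemPi L k s π)
    (h0 : ∀ i, 1 ≤ i → i ≤ k → π i ≠ 0) (v : ℕ) :
    ((Finset.Icc 1 k).filter (fun i => relLoc π i ≤ v)).card
      = ∑ c ∈ Finset.Icc 1 L, min v (s c) := by
  rw [Finset.card_eq_sum_card_fiberwise (f := π) (t := Finset.Icc 1 L) (by
    intro x hx
    simp only [Finset.coe_filter, Finset.mem_coe, Set.mem_setOf_eq, Finset.mem_filter, Finset.mem_Icc] at hx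
    simp only [Finset.mem_coe, Finset.mem_Icc]
    have := h0 x hx.1.1 hx.1.2
    exact ⟨by omega, hπ.1 x hx.1.1 hx.1.2⟩)]
  apply Finset.sum_congr rfl
  intro c hc
  simp only [Finset.mem_Icc] at hc
  rw [← cluster_count k L s π hπ c hc.2 v]
  congr 1
  rw [Finset.filter_filter, Finset.filter_filter]
  apply Finset.filter_congr
  intro x _
  simp [and_comm]

/-- for a fixed distribution `s` with `s_0 = 0`, the vertical order minimizes
the min-cut among all cluster orders in `Π(s)`. -/
theorem stmt2 (L R k dI dC : ℕ) (βI βC α : ℝ)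
    (hL : 1 ≤ L) (hR : 2 ≤ R) (hk : 2 ≤ k)
    (hdI : dI = R - 1) (hdC : 1 ≤ dC) (hkd : k ≤ dI + dC)
    (hβ : βC ≤ βI) (hβC : 0 < βC) (hα : 0 < α)
    (s : ℕ → ℕ) (hs : IsDist L R k s) (hs0 : s 0 = 0)
    (πstar : ℕ → ℕ) (hstar : IsVerticalOrder L k s πstar)
    (π : ℕ → ℕ) (hπ : MemPi L k s π) :
    MC k dI dC βI βC α πstar ≤ MC k dI dC βI βC α π := by
  obtain ⟨hsmono, hsR, hssum⟩ := hs
  have hnz : ∀ (ρ : ℕ → ℕ), MemPi L k s ρ → ∀ i, 1 ≤ i → i ≤ k → ρ i ≠ 0 := by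
    intro ρ hρ i h1 h2 hzero
    have hc := hρ.2 0 (Nat.zero_le L)
    rw [hs0, Finset.card_eq_zero] at hc
    have : i ∈ (Finset.Icc 1 k).filter (fun j => ρ j = 0) := by
      simp [Finset.mem_Icc, h1, h2, hzero]
    rw [hc] at this
    exact absurd this (Finset.notMem_empty i)
  have hπ0 := hnz π hπ
  have hs1 := hstar.1
  have hπs0 := hnz πstar hs1
  have hbound : ∀ (ρ : ℕ → ℕ), MemPi L k s ρ → (∀ i, 1 ≤ i → i ≤ k → ρ i ≠ 0) →
      ∀ i, 1 ≤ i → i ≤ k → relLoc ρ i ≤ dI + 1 := by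
    intro ρ hρ h0 i h1 h2
    have hle : relLoc ρ i ≤ s (ρ i) := by
      rw [← hρ.2 (ρ i) (hρ.1 i h1 h2)]
      apply Finset.card_le_card
      intro x hx
      simp only [Finset.mem_filter, Finset.mem_Icc] at hx ⊢
      exact ⟨⟨hx.1.1, le_trans hx.1.2 h2⟩, hx.2⟩
    have hsc : s (ρ i) ≤ R := hsR (ρ i) (by have := h0 i h1 h2; omega) (hρ.1 i h1 h2)
    omega
  have hMC : ∀ (ρ : ℕ → ℕ), (∀ i, 1 ≤ i → i ≤ k → ρ i ≠ 0) →
      MC k dI dC βI βC α ρ = ∑ i ∈ Finset.Icc 1 k, Gfun dI dC βI βC α i (relLoc ρ i) := by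
    intro ρ h0
    unfold MC
    apply Finset.sum_congr rfl
    intro i hi
    simp only [Finset.mem_Icc] at hi
    simp only [Gfun, weight, aCoef, bCoef, if_neg (h0 i hi.1 hi.2)]
  rw [hMC π hπ0, hMC πstar hπs0]
  have hdecomp : ∀ (ρ : ℕ → ℕ),
      (∀ i, 1 ≤ i → i ≤ k → relLoc ρ i ≤ dI + 1) →
      ∑ i ∈ Finset.Icc 1 k, Gfun dI dC βI βC α i (relLoc ρ i)
        = (∑ i ∈ Finset.Icc 1 k, Gfun dI dC βI βC α i (dI + 1))
          + ∑ v ∈ Finset.Ico 1 (dI + 1),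
              ∑ i ∈ (Finset.Icc 1 k).filter (fun i => relLoc ρ i ≤ v),
                (Gfun dI dC βI βC α i v - Gfun dI dC βI βC α i (v + 1)) := by
    intro ρ hb
    have step1 : ∀ i ∈ Finset.Icc 1 k,
        Gfun dI dC βI βC α i (relLoc ρ i)
          = Gfun dI dC βI βC α i (dI + 1)
            + ∑ v ∈ Finset.Ico 1 (dI + 1),
                (if relLoc ρ i ≤ v then Gfun dI dC βI βC α i v - Gfun dI dC βI βC α i (v + 1)
                 else 0) := by
      intro i hi
      simp only [Finset.mem_Icc] at hi
      have htel := telescope_sum (Gfun dI dC βI βC α i) (hb i hi.1 hi.2)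
      rw [htel]
      congr 1
      have hset : Finset.Ico (relLoc ρ i) (dI + 1)
          = (Finset.Ico 1 (dI + 1)).filter (fun v => relLoc ρ i ≤ v) := by
        have h1 := relLoc_pos ρ (i := i) hi.1
        ext x
        simp only [Finset.mem_Ico, Finset.mem_filter]
        omega
      rw [hset, Finset.sum_filter]
    rw [Finset.sum_congr rfl step1, Finset.sum_add_distrib]
    congr 1
    rw [Finset.sum_comm]
    apply Finset.sum_congr rfl
    intro v _
    rw [Finset.sum_filter]
  rw [hdecomp π (hbound π hπ hπ0), hdecomp πstar (hbound πstar hs1 hπs0)]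
  apply add_le_add_right
  apply Finset.sum_le_sum
  intro v hv
  simp only [Finset.mem_Ico] at hv
  have hcount : ((Finset.Icc 1 k).filter (fun i => relLoc πstar i ≤ v)).card
      = ((Finset.Icc 1 k).filter (fun i => relLoc π i ≤ v)).card := by
    rw [count_le_v k L s πstar hs1 hπs0 v, count_le_v k L s π hπ hπ0 v]
  rcases le_or_gt k v with hkv | hkv
  · have hall : ∀ (ρ : ℕ → ℕ),
        (Finset.Icc 1 k).filter (fun i => relLoc ρ i ≤ v) = Finset.Icc 1 k := by
      intro ρ
      apply Finset.filter_true_of_mem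
      intro x hx
      simp only [Finset.mem_Icc] at hx
      exact le_trans (relLoc_le_self ρ x) (le_trans hx.2 hkv)
    rw [hall π, hall πstar]
  · set Sg := (Finset.Icc 1 k).filter (fun i => relLoc πstar i ≤ v) with hSgdef
    set Sh := (Finset.Icc 1 k).filter (fun i => relLoc π i ≤ v) with hShdef
    have hmonoStar : ∀ i j, 1 ≤ i → i ≤ j → j ≤ k → relLoc πstar i ≤ relLoc πstar j := by
      intro i j h1 h2 h3
      rcases eq_or_lt_of_le h2 with rfl | hlt
      · exact le_refl _
      · exact (hstar.2 i j h1 hlt h3 (hπs0 i h1 (by omega)) (hπs0 j (by omega) h3)).1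
    have hSgIcc : Sg = Finset.Icc 1 Sg.card := by
      apply downClosed_eq_Icc Sg (Finset.filter_subset _ _)
      intro i j h1 hij hj
      simp only [hSgdef, Finset.mem_filter, Finset.mem_Icc] at hj ⊢
      exact ⟨⟨h1, le_trans hij hj.1.2⟩, le_trans (hmonoStar i j h1 hij hj.1.2) hj.2⟩
    have hIccSubh : Finset.Icc 1 v ⊆ Sh := by
      intro i hi
      simp only [Finset.mem_Icc] at hi
      simp only [hShdef, Finset.mem_filter, Finset.mem_Icc]
      exact ⟨⟨hi.1, by omega⟩, le_trans (relLoc_le_self π i) hi.2⟩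
    have hIccSubg : Finset.Icc 1 v ⊆ Sg := by
      intro i hi
      simp only [Finset.mem_Icc] at hi
      simp only [hSgdef, Finset.mem_filter, Finset.mem_Icc]
      exact ⟨⟨hi.1, by omega⟩, le_trans (relLoc_le_self πstar i) hi.2⟩
    have hvN : v ≤ Sg.card := by
      have := Finset.card_le_card hIccSubg
      simpa [Nat.card_Icc] using this
    have hIccSubN : Finset.Icc 1 v ⊆ Finset.Icc 1 Sg.card := by
      intro x hx
      simp only [Finset.mem_Icc] at hx ⊢
      omega
    have hsd : Finset.Icc 1 Sg.card \ Finset.Icc 1 v = Finset.Icc (v + 1) Sg.card := by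
      ext x
      simp only [Finset.mem_sdiff, Finset.mem_Icc]
      omega
    rw [hSgIcc, ← Finset.sum_sdiff hIccSubN, ← Finset.sum_sdiff hIccSubh, hsd]
    apply add_le_add_left
    have hNform : Finset.Icc (v + 1) Sg.card = Finset.Icc (v + 1) (v + (Sg.card - v)) := by
      congr 1
      omega
    rw [hNform]
    apply sum_prefix_le (k := k)
    · intro x hx
      simp only [Finset.mem_sdiff, hShdef, Finset.mem_filter, Finset.mem_Icc] at hx
      simp only [Finset.mem_Icc]
      obtain ⟨⟨⟨hx1, hxk⟩, _⟩, hx2⟩ := hx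
      constructor
      · by_contra hlt
        push_neg at hlt
        exact hx2 ⟨hx1, by omega⟩
      · exact hxk
    · rw [Finset.card_sdiff_of_subset hIccSubh, ← hcount]
      simp [Nat.card_Icc]
    · intro i j h1 h2 h3
      exact Gfun_diff_mono dI dC βI βC α hβ hβC h1 h2 (by omega)
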